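/- arXiv:2012.05760 — 3 statements merged into one kernel-verified Lean document; each statement's English description precedes it below -/
import Mathlib

section
/- Consider a deep network with forward recursion H₁ = W₀X, X_k = φ(H_k), H_{k+1} = W_k X_k for k = 1,…,L, weight matrices W_k ∈ ℝ^{n_{k+1}×n_k}, differentiable activation φ applied entrywise, and square loss L(W₀,…,W_L) = ½‖Y − H_{L+1}‖_F². Let W* = (W₀*,…,W_L*) be a point in weight space and l ∈ {1,…,L} such that: (i) φ′(z) ≠ 0 for all z ∈ ℝ; (ii) rank(X_l*) = m; (iii) rank(W_{l′}*) = n_{l′+1} for all l′ ∈ {l+1,…,L}; and (iv) the gradient of L with respect to W_l vanishes at W*. Then L(W*) = 0, i.e. W* achieves the global minimum of L. -/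
/-- Layer activations of a deep fully-connected network without biases:
`X₀ = X`, `X_{k+1} = φ(H_{k+1}) = φ(W_k X_k)` (`φ` applied entrywise). -/
noncomputable def layerActivations (φ : ℝ → ℝ) (d : ℕ → ℕ) {m : ℕ}
    (X : Matrix (Fin (d 0)) (Fin m) ℝ)
    (W : (k : ℕ) → Fin (d (k + 1)) → Fin (d k) → ℝ) :
    (k : ℕ) → Matrix (Fin (d k)) (Fin m) ℝ
  | 0 => X
  | (k + 1) => (Matrix.of (W k) * layerActivations φ d X W k).map φ

/-- The network output `H_{L+1} = W_L X_L` of an `L`-hidden-layer network. -/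
noncomputable def netOutput (φ : ℝ → ℝ) (d : ℕ → ℕ) (L : ℕ) {m : ℕ}
    (X : Matrix (Fin (d 0)) (Fin m) ℝ)
    (W : (k : ℕ) → Fin (d (k + 1)) → Fin (d k) → ℝ) :
    Matrix (Fin (d (L + 1))) (Fin m) ℝ :=
  Matrix.of (W L) * layerActivations φ d X W L

/-- The square loss `L(W₀, …, W_L) = ½‖Y − H_{L+1}‖_F²`. -/
noncomputable def deepSquareLoss (φ : ℝ → ℝ) (d : ℕ → ℕ) (L : ℕ) {m : ℕ}
    (X : Matrix (Fin (d 0)) (Fin m) ℝ) (Y : Matrix (Fin (d (L + 1))) (Fin m) ℝ)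
    (W : (k : ℕ) → Fin (d (k + 1)) → Fin (d k) → ℝ) : ℝ :=
  (1 / 2) * ∑ i, ∑ j, (Y i j - netOutput φ d L X W i j) ^ 2

lemma aux_mulVec_inj {n m : ℕ} (M : Matrix (Fin n) (Fin m) ℝ) (h : M.rank = m) :
    Function.Injective M.mulVec := by
  have h1 : Module.finrank ℝ (LinearMap.ker M.mulVecLin) = 0 := by
    have h2 := LinearMap.finrank_range_add_finrank_ker M.mulVecLin
    have hr : Module.finrank ℝ (LinearMap.range M.mulVecLin) = m := h
    rw [hr, Module.finrank_pi, Fintype.card_fin] at h2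
    omega
  have : LinearMap.ker M.mulVecLin = ⊥ := Submodule.finrank_eq_zero.1 h1
  have hinj : Function.Injective M.mulVecLin := LinearMap.ker_eq_bot.1 this
  exact hinj

-- rank X = m (full column rank), A * Xᵀ = 0 ⇒ A = 0  stated entrywise
lemma aux_pair_zero {n m p : ℕ} (Xl : Matrix (Fin n) (Fin m) ℝ) (h : Xl.rank = m)
    (A : Matrix (Fin p) (Fin m) ℝ)
    (hA : ∀ U : Fin p → Fin n → ℝ, ∑ i, ∑ j, A i j * (Matrix.of U * Xl) i j = 0) :
    A = 0 := by
  have key : ∀ i c, ∑ j, A i j * Xl c j = 0 := by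
    intro i c
    have := hA (fun i' c' => if i' = i ∧ c' = c then 1 else 0)
    simpa [Matrix.mul_apply, Finset.mul_sum, Finset.sum_ite, ite_and,
      Finset.sum_comm (γ := Fin m)] using this
  ext i j
  have h0 : Xl.mulVec (A i) = 0 := by
    ext c
    simpa [Matrix.mulVec, dotProduct, mul_comm] using key i c
  have := aux_mulVec_inj Xl h (a₁ := A i) (a₂ := 0) (by simpa using h0)
  simpa using congrFun this j

lemma aux_transpose_cancel {p q mm : ℕ} (W : Matrix (Fin p) (Fin q) ℝ) (h : W.rank = p)
    (C : Matrix (Fin p) (Fin mm) ℝ)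
    (hC : ∀ a j, ∑ b, W b a * C b j = 0) : C = 0 := by
  have hT : (W.transpose).rank = p := by rw [Matrix.rank_transpose]; exact h
  have hinj := aux_mulVec_inj W.transpose hT
  ext b j
  have h0 : W.transpose.mulVec (fun b => C b j) = 0 := by
    ext a
    simpa [Matrix.mulVec, dotProduct, Matrix.transpose_apply] using hC a j
  have := hinj (a₁ := fun b => C b j) (a₂ := 0) (by simpa using h0)
  simpa using congrFun this b

lemma layerActivations_update_eq (φ : ℝ → ℝ) (d : ℕ → ℕ) {m : ℕ}
    (X : Matrix (Fin (d 0)) (Fin m) ℝ)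
    (W : (k : ℕ) → Fin (d (k + 1)) → Fin (d k) → ℝ) (l : ℕ)
    (V : Fin (d (l + 1)) → Fin (d l) → ℝ) :
    ∀ k, k ≤ l → layerActivations φ d X (Function.update W l V) k = layerActivations φ d X W k := by
  intro k
  induction k with
  | zero => intro _; rfl
  | succ k ih =>
    intro hk
    have hkl : k ≠ l := by omega
    rw [layerActivations, layerActivations, ih (by omega), Function.update_of_ne hkl]

section Forward

variable (φ : ℝ → ℝ) (d : ℕ → ℕ) {m : ℕ}

lemma forward_deriv (hφdiff : Differentiable ℝ φ) (hφ' : ∀ z, deriv φ z ≠ 0)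
    (X : Matrix (Fin (d 0)) (Fin m) ℝ)
    (W : (k : ℕ) → Fin (d (k + 1)) → Fin (d k) → ℝ) (l : ℕ) :
    ∀ k, l + 1 ≤ k →
    ∃ T : (Fin (d (l+1)) → Fin (d l) → ℝ) →L[ℝ] (Fin (d k) → Fin m → ℝ),
      HasFDerivAt
        (fun V (i : Fin (d k)) (j : Fin m) =>
          layerActivations φ d X (Function.update W l V) k i j)
        T (W l)
      ∧ ∀ C : Fin (d k) → Fin m → ℝ, ∃ C' : Fin (d (l+1)) → Fin m → ℝ,
        (∀ U, ∑ i, ∑ j, C i j * T U i j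
           = ∑ i, ∑ j, C' i j * (Matrix.of U * layerActivations φ d X W l) i j)
        ∧ ((∀ j', l < j' → j' < k → (Matrix.of (W j')).rank = d (j' + 1)) →
            C' = 0 → C = 0) := by
  intro k hk
  induction k, hk using Nat.le_induction with
  | base =>
    set Xl := layerActivations φ d X W l with hXl
    set H := Matrix.of (W l) * Xl with hH
    set S : (i : Fin (d (l+1))) → (j : Fin m) →
        ((Fin (d (l+1)) → Fin (d l) → ℝ) →L[ℝ] ℝ) :=
      fun i j => ∑ c, Xl c j •
        ((ContinuousLinearMap.proj (R := ℝ) (φ := fun _ : Fin (d l) => ℝ) c).comp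
          (ContinuousLinearMap.proj (R := ℝ)
            (φ := fun _ : Fin (d (l+1)) => Fin (d l) → ℝ) i)) with hS
    have hSapp : ∀ i j U, S i j U = ∑ c, U i c * Xl c j := by
      intro i j U
      simp [hS, ContinuousLinearMap.sum_apply, mul_comm]
    refine ⟨ContinuousLinearMap.pi (fun i => ContinuousLinearMap.pi
        (fun j => deriv φ (H i j) • S i j)), ?_, ?_⟩
    · have hfun : (fun V => (layerActivations φ d X (Function.update W l V) (l+1)
            : Fin (d (l+1)) → Fin m → ℝ))
          = fun V i j => φ (∑ c, V i c * Xl c j) := by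
        funext V i j
        rw [layerActivations,
          layerActivations_update_eq φ d X W l V l le_rfl, Function.update_self]
        simp [Matrix.mul_apply, Xl]
      rw [hfun]
      apply hasFDerivAt_pi.2
      intro i
      apply hasFDerivAt_pi.2
      intro j
      have hinner : HasFDerivAt (fun V : Fin (d (l+1)) → Fin (d l) → ℝ =>
          ∑ c, V i c * Xl c j) (S i j) (W l) := by
        have : (fun V : Fin (d (l+1)) → Fin (d l) → ℝ => ∑ c, V i c * Xl c j)
            = fun V => S i j V := by
          funext V; rw [hSapp]
        rw [this]
        exact (S i j).hasFDerivAt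
      have hval : (∑ c, W l i c * Xl c j) = H i j := by
        simp [hH, Matrix.mul_apply]
      have hcomp := (hφdiff (∑ c, W l i c * Xl c j)).hasDerivAt.comp_hasFDerivAt
        (W l) hinner
      rw [hval] at hcomp
      exact hcomp
    · intro C
      refine ⟨fun i j => deriv φ (H i j) * C i j, ?_, ?_⟩
      · intro U
        have : ∀ i j, (ContinuousLinearMap.pi (fun i => ContinuousLinearMap.pi
            (fun j => deriv φ (H i j) • S i j))) U i j
            = deriv φ (H i j) * S i j U := by
          intro i j; simp
        refine Finset.sum_congr rfl fun i _ => Finset.sum_congr rfl fun j _ => ?_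
        rw [this, hSapp]
        simp [Matrix.mul_apply]
        ring
      · intro _ hC'
        funext i j
        have := congrFun (congrFun hC' i) j
        simp at this
        rcases this with h | h
        · exact absurd h (hφ' _)
        · exact h
  | succ k hk ih =>
    obtain ⟨T, hT, hspec⟩ := ih
    set Xk := layerActivations φ d X W k with hXk
    set Hk1 := Matrix.of (W k) * Xk with hHk1
    have hkl : k ≠ l := by omega
    set D : (i : Fin (d (k+1))) → (j : Fin m) →
        ((Fin (d (l+1)) → Fin (d l) → ℝ) →L[ℝ] ℝ) :=
      fun i j => ∑ c, W k i c •
        ((((ContinuousLinearMap.proj (R := ℝ) (φ := fun _ : Fin m => ℝ) j).comp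
          (ContinuousLinearMap.proj (R := ℝ)
            (φ := fun _ : Fin (d k) => Fin m → ℝ) c))).comp T) with hD
    have hDapp : ∀ i j U, D i j U = ∑ c, W k i c * T U c j := by
      intro i j U
      simp [hD, ContinuousLinearMap.sum_apply]
    refine ⟨ContinuousLinearMap.pi (fun i => ContinuousLinearMap.pi
        (fun j => deriv φ (Hk1 i j) • D i j)), ?_, ?_⟩
    · have hfun : (fun V => (layerActivations φ d X (Function.update W l V) (k+1)
            : Fin (d (k+1)) → Fin m → ℝ))
          = fun V i j => φ (∑ c, W k i c *
              layerActivations φ d X (Function.update W l V) k c j) := by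
        funext V i j
        rw [layerActivations, Function.update_of_ne hkl]
        simp [Matrix.mul_apply]
      rw [hfun]
      apply hasFDerivAt_pi.2
      intro i
      apply hasFDerivAt_pi.2
      intro j
      have hinner : HasFDerivAt (fun V : Fin (d (l+1)) → Fin (d l) → ℝ =>
          ∑ c, W k i c * layerActivations φ d X (Function.update W l V) k c j)
          (D i j) (W l) := by
        rw [hD]
        apply HasFDerivAt.fun_sum
        intro c _
        exact ((((ContinuousLinearMap.proj (R := ℝ) (φ := fun _ : Fin m => ℝ) j).comp
          (ContinuousLinearMap.proj (R := ℝ)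
            (φ := fun _ : Fin (d k) => Fin m → ℝ) c)).hasFDerivAt.comp
          (W l) hT).const_mul _)
      have hval : (∑ c, W k i c *
          layerActivations φ d X (Function.update W l (W l)) k c j) = Hk1 i j := by
        rw [Function.update_eq_self]
        simp [hHk1, hXk, Matrix.mul_apply]
      have hcomp := (hφdiff (∑ c, W k i c *
          layerActivations φ d X (Function.update W l (W l)) k c j)).hasDerivAt.comp_hasFDerivAt
        (W l) hinner
      rw [hval] at hcomp
      exact hcomp
    · intro C
      obtain ⟨C', hp, hinj⟩ := hspec (fun c j => ∑ i, W k i c * (deriv φ (Hk1 i j) * C i j))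
      refine ⟨C', ?_, ?_⟩
      · intro U
        rw [← hp U]
        have happ : ∀ i j, (ContinuousLinearMap.pi (fun i => ContinuousLinearMap.pi
            (fun j => deriv φ (Hk1 i j) • D i j))) U i j
            = deriv φ (Hk1 i j) * D i j U := by
          intro i j; simp
        calc ∑ i, ∑ j, C i j * (ContinuousLinearMap.pi (fun i => ContinuousLinearMap.pi
            (fun j => deriv φ (Hk1 i j) • D i j))) U i j
            = ∑ i, ∑ j, ∑ c, W k i c * (deriv φ (Hk1 i j) * C i j) * T U c j := by
              refine Finset.sum_congr rfl fun i _ => Finset.sum_congr rfl fun j _ => ?_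
              rw [happ, hDapp, Finset.mul_sum, Finset.mul_sum]
              exact Finset.sum_congr rfl fun c _ => by ring
          _ = ∑ j, ∑ i, ∑ c, W k i c * (deriv φ (Hk1 i j) * C i j) * T U c j :=
              Finset.sum_comm
          _ = ∑ j, ∑ c, ∑ i, W k i c * (deriv φ (Hk1 i j) * C i j) * T U c j :=
              Finset.sum_congr rfl fun j _ => Finset.sum_comm
          _ = ∑ c, ∑ j, ∑ i, W k i c * (deriv φ (Hk1 i j) * C i j) * T U c j :=
              Finset.sum_comm
          _ = ∑ c, ∑ j, (∑ i, W k i c * (deriv φ (Hk1 i j) * C i j)) * T U c j := by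
              refine Finset.sum_congr rfl fun c _ => Finset.sum_congr rfl fun j _ => ?_
              rw [Finset.sum_mul]
      · intro hfr hC'
        have hC1 : (fun c j => ∑ i, W k i c * (deriv φ (Hk1 i j) * C i j))
            = (0 : Fin (d k) → Fin m → ℝ) :=
          hinj (fun j' h1 h2 => hfr j' h1 (by omega)) hC'
        have hmat : (Matrix.of (fun i j => deriv φ (Hk1 i j) * C i j)
            : Matrix (Fin (d (k+1))) (Fin m) ℝ) = 0 := by
          apply aux_transpose_cancel (Matrix.of (W k)) (hfr k (by omega) (by omega))
          intro a j
          exact congrFun (congrFun hC1 a) j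
        funext i j
        have := congrFun (congrFun hmat i) j
        simp at this
        rcases this with h | h
        · exact absurd h (hφ' _)
        · exact h

end Forward

lemma aux_loss {a b n mm : ℕ} (Yf : Fin n → Fin mm → ℝ)
    (outF : (Fin a → Fin b → ℝ) → Fin n → Fin mm → ℝ)
    (Tout : (Fin a → Fin b → ℝ) →L[ℝ] (Fin n → Fin mm → ℝ))
    (W0 : Fin a → Fin b → ℝ)
    (hout : HasFDerivAt outF Tout W0)
    (hgrad : fderiv ℝ (fun V => (1/2 : ℝ) * ∑ i, ∑ j, (Yf i j - outF V i j)^2) W0 = 0) :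
    ∀ U, ∑ i, ∑ j, (Yf i j - outF W0 i j) * Tout U i j = 0 := by
  classical
  set P : (i : Fin n) → (j : Fin mm) → (Fin n → Fin mm → ℝ) →L[ℝ] ℝ :=
    fun i j => (ContinuousLinearMap.proj (R := ℝ) (φ := fun _ : Fin mm => ℝ) j).comp
      (ContinuousLinearMap.proj (R := ℝ) (φ := fun _ : Fin n => Fin mm → ℝ) i) with hP
  have hterm : ∀ i j, HasFDerivAt (fun V => (Yf i j - outF V i j)^2)
      ((((2:ℕ):ℝ) * (Yf i j - outF W0 i j) ^ (2-1)) • (0 - (P i j).comp Tout)) W0 := by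
    intro i j
    have houtij : HasFDerivAt (fun V => outF V i j) ((P i j).comp Tout) W0 :=
      (P i j).hasFDerivAt.comp W0 hout
    exact (hasDerivAt_pow 2 (Yf i j - outF W0 i j)).comp_hasFDerivAt W0
      ((hasFDerivAt_const (Yf i j) W0).sub houtij)
  have hinner : ∀ i, HasFDerivAt (fun V => ∑ j, (Yf i j - outF V i j)^2)
      (∑ j, (((2:ℕ):ℝ) * (Yf i j - outF W0 i j) ^ (2-1)) • (0 - (P i j).comp Tout)) W0 :=
    fun i => HasFDerivAt.fun_sum (fun j _ => hterm i j)
  have houter : HasFDerivAt (fun V => ∑ i, ∑ j, (Yf i j - outF V i j)^2)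
      (∑ i, ∑ j, (((2:ℕ):ℝ) * (Yf i j - outF W0 i j) ^ (2-1)) • (0 - (P i j).comp Tout)) W0 :=
    HasFDerivAt.fun_sum (fun i _ => hinner i)
  have hloss := houter.const_mul (1/2 : ℝ)
  have hz : ((1/2 : ℝ) • (∑ i, ∑ j, (((2:ℕ):ℝ) * (Yf i j - outF W0 i j) ^ (2-1)) •
      (0 - (P i j).comp Tout)) : (Fin a → Fin b → ℝ) →L[ℝ] ℝ) = 0 := by
    rw [← hloss.fderiv]; exact hgrad
  intro U
  have hU := congrFun (congrArg DFunLike.coe hz) U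
  simp only [ContinuousLinearMap.smul_apply, ContinuousLinearMap.sum_apply,
    ContinuousLinearMap.sub_apply, ContinuousLinearMap.zero_apply,
    ContinuousLinearMap.comp_apply, ContinuousLinearMap.coe_sum',
    smul_eq_mul, pow_one, Nat.cast_ofNat, hP, ContinuousLinearMap.proj_apply,
    ContinuousLinearMap.zero_apply] at hU
  have hrw : ∑ i, ∑ j, 2 * (Yf i j - outF W0 i j) ^ (2-1) *
      (0 - Tout U i j)
      = (-2 : ℝ) * ∑ i, ∑ j, (Yf i j - outF W0 i j) * Tout U i j := by
    rw [Finset.mul_sum]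
    refine Finset.sum_congr rfl fun i _ => ?_
    rw [Finset.mul_sum]
    exact Finset.sum_congr rfl fun j _ => by ring
  rw [hrw] at hU
  have := hU
  linarith

lemma aux_sum3 {a b c : ℕ} (f : Fin a → Fin b → Fin c → ℝ) :
    ∑ i, ∑ j, ∑ k, f i j k = ∑ k, ∑ j, ∑ i, f i j k :=
  calc ∑ i, ∑ j, ∑ k, f i j k
      = ∑ j, ∑ i, ∑ k, f i j k := Finset.sum_comm
    _ = ∑ j, ∑ k, ∑ i, f i j k := Finset.sum_congr rfl fun j _ => Finset.sum_comm
    _ = ∑ k, ∑ j, ∑ i, f i j k := Finset.sum_comm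

/-- If, at a point `W*` of the weight space: the differentiable activation has nowhere
vanishing derivative, `rank X_l* = m` for some `l ∈ {1,…,L}`, all the later weight
matrices `W_{l+1}*, …, W_L*` have full row rank, and the gradient of the square loss
with respect to `W_l` vanishes, then `W*` attains the global minimum: `L(W*) = 0`. -/
theorem deep_critical_point_is_global_minimum
    (m : ℕ) (d : ℕ → ℕ) (L l : ℕ) (hl1 : 1 ≤ l) (hlL : l ≤ L)
    (φ : ℝ → ℝ) (hφdiff : Differentiable ℝ φ) (hφ' : ∀ z : ℝ, deriv φ z ≠ 0)
    (X : Matrix (Fin (d 0)) (Fin m) ℝ) (Y : Matrix (Fin (d (L + 1))) (Fin m) ℝ)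
    (W : (k : ℕ) → Fin (d (k + 1)) → Fin (d k) → ℝ)
    (hrank : (layerActivations φ d X W l).rank = m)
    (hfull : ∀ l', l < l' → l' ≤ L → (Matrix.of (W l')).rank = d (l' + 1))
    (hgrad : fderiv ℝ
      (fun V : Fin (d (l + 1)) → Fin (d l) → ℝ =>
        deepSquareLoss φ d L X Y (Function.update W l V)) (W l) = 0) :
    deepSquareLoss φ d L X Y W = 0 := by
  classical
  set Xl := layerActivations φ d X W l with hXl
  have main : ∀ i j, Y i j - netOutput φ d L X W i j = 0 := by
    rcases eq_or_lt_of_le hlL with hEq | hlt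
    · -- case l = L
      subst hEq
      set S : (i : Fin (d (l+1))) → (j : Fin m) →
          ((Fin (d (l+1)) → Fin (d l) → ℝ) →L[ℝ] ℝ) :=
        fun i j => ∑ c, Xl c j •
          ((ContinuousLinearMap.proj (R := ℝ) (φ := fun _ : Fin (d l) => ℝ) c).comp
            (ContinuousLinearMap.proj (R := ℝ)
              (φ := fun _ : Fin (d (l+1)) => Fin (d l) → ℝ) i)) with hS
      have hSapp : ∀ i j U, S i j U = ∑ c, U i c * Xl c j := by
        intro i j U
        simp [hS, ContinuousLinearMap.sum_apply, mul_comm]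
      set Tout := ContinuousLinearMap.pi
        (fun i => ContinuousLinearMap.pi (fun j => S i j)) with hTout
      have hout : HasFDerivAt
          (fun V (i : Fin (d (l+1))) (j : Fin m) =>
            netOutput φ d l X (Function.update W l V) i j) Tout (W l) := by
        have hfun : (fun V (i : Fin (d (l+1))) (j : Fin m) =>
              netOutput φ d l X (Function.update W l V) i j)
            = fun V i j => ∑ c, V i c * Xl c j := by
          funext V i j
          rw [netOutput, layerActivations_update_eq φ d X W l V l le_rfl,
            Function.update_self]
          simp [Matrix.mul_apply, hXl]
        rw [hfun, hTout]
        apply hasFDerivAt_pi.2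
        intro i
        apply hasFDerivAt_pi.2
        intro j
        have : (fun V : Fin (d (l+1)) → Fin (d l) → ℝ => ∑ c, V i c * Xl c j)
            = fun V => S i j V := by
          funext V; rw [hSapp]
        rw [this]
        exact (S i j).hasFDerivAt
      have hpair := aux_loss (fun i j => Y i j)
        (fun V (i : Fin (d (l+1))) (j : Fin m) =>
          netOutput φ d l X (Function.update W l V) i j) Tout (W l) hout hgrad
      intro i j
      simp only [Function.update_eq_self] at hpair
      have hE := aux_pair_zero Xl hrank
        (fun i j => Y i j - netOutput φ d l X W i j) (by
          intro U
          have := hpair U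
          rw [← this]
          refine Finset.sum_congr rfl fun i _ => Finset.sum_congr rfl fun j _ => ?_
          congr 1
          rw [hTout]
          simp only [ContinuousLinearMap.pi_apply]
          rw [hSapp]
          simp [Matrix.mul_apply])
      exact congrFun (congrFun hE i) j
    · -- case l < L
      obtain ⟨T, hT, hspec⟩ := forward_deriv φ d hφdiff hφ' X W l L hlt
      have hlL' : l ≠ L := Nat.ne_of_lt hlt
      set D : (i : Fin (d (L+1))) → (j : Fin m) →
          ((Fin (d (l+1)) → Fin (d l) → ℝ) →L[ℝ] ℝ) :=
        fun i j => ∑ c, W L i c •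
          ((((ContinuousLinearMap.proj (R := ℝ) (φ := fun _ : Fin m => ℝ) j).comp
            (ContinuousLinearMap.proj (R := ℝ)
              (φ := fun _ : Fin (d L) => Fin m → ℝ) c))).comp T) with hD
      have hDapp : ∀ i j U, D i j U = ∑ c, W L i c * T U c j := by
        intro i j U
        simp [hD, ContinuousLinearMap.sum_apply]
      set Tout := ContinuousLinearMap.pi
        (fun i => ContinuousLinearMap.pi (fun j => D i j)) with hTout
      have hout : HasFDerivAt
          (fun V (i : Fin (d (L+1))) (j : Fin m) =>
            netOutput φ d L X (Function.update W l V) i j) Tout (W l) := by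
        have hfun : (fun V (i : Fin (d (L+1))) (j : Fin m) =>
              netOutput φ d L X (Function.update W l V) i j)
            = fun V i j => ∑ c, W L i c *
                layerActivations φ d X (Function.update W l V) L c j := by
          funext V i j
          rw [netOutput, Function.update_of_ne (Ne.symm hlL')]
          simp [Matrix.mul_apply]
        rw [hfun, hTout]
        apply hasFDerivAt_pi.2
        intro i
        apply hasFDerivAt_pi.2
        intro j
        rw [hD]
        apply HasFDerivAt.fun_sum
        intro c _
        exact ((((ContinuousLinearMap.proj (R := ℝ) (φ := fun _ : Fin m => ℝ) j).comp
          (ContinuousLinearMap.proj (R := ℝ)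
            (φ := fun _ : Fin (d L) => Fin m → ℝ) c)).hasFDerivAt.comp
          (W l) hT).const_mul _)
      have hpair := aux_loss (fun i j => Y i j)
        (fun V (i : Fin (d (L+1))) (j : Fin m) =>
          netOutput φ d L X (Function.update W l V) i j) Tout (W l) hout hgrad
      simp only [Function.update_eq_self] at hpair
      set E : Fin (d (L+1)) → Fin m → ℝ :=
        fun i j => Y i j - netOutput φ d L X W i j with hEdef
      set C : Fin (d L) → Fin m → ℝ := fun c j => ∑ i, W L i c * E i j with hCdef
      obtain ⟨C', hp, hinj⟩ := hspec C
      have hswap : ∀ U, ∑ c, ∑ j, C c j * T U c j = ∑ i, ∑ j, E i j * Tout U i j := by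
        intro U
        calc ∑ c, ∑ j, C c j * T U c j
            = ∑ c, ∑ j, ∑ i, W L i c * E i j * T U c j := by
              refine Finset.sum_congr rfl fun c _ => Finset.sum_congr rfl fun j _ => ?_
              rw [hCdef, Finset.sum_mul]
          _ = ∑ i, ∑ j, ∑ c, W L i c * E i j * T U c j :=
              (aux_sum3 (fun i j c => W L i c * E i j * T U c j)).symm
          _ = ∑ i, ∑ j, E i j * Tout U i j := by
              refine Finset.sum_congr rfl fun i _ => Finset.sum_congr rfl fun j _ => ?_
              rw [hTout]
              simp only [ContinuousLinearMap.pi_apply]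
              rw [hDapp, Finset.mul_sum]
              exact Finset.sum_congr rfl fun c _ => by ring
      have hC'0 : ∀ U : Fin (d (l+1)) → Fin (d l) → ℝ,
          ∑ i, ∑ j, C' i j * (Matrix.of U * Xl) i j = 0 := by
        intro U
        rw [← hp U, hswap U]
        exact hpair U
      have hC' : C' = 0 := aux_pair_zero Xl hrank C' hC'0
      have hC : C = 0 := hinj (fun j' h1 h2 => hfull j' h1 (by omega)) hC'
      have hE : (fun i j => E i j) = (0 : Matrix (Fin (d (L+1))) (Fin m) ℝ) := by
        apply aux_transpose_cancel (Matrix.of (W L)) (hfull L hlt le_rfl)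
        intro a j
        exact congrFun (congrFun hC a) j
      intro i j
      exact congrFun (congrFun hE i) j
  have hz : ∑ i, ∑ j, (Y i j - netOutput φ d L X W i j) ^ 2 = 0 := by
    refine Finset.sum_eq_zero fun i _ => Finset.sum_eq_zero fun j _ => ?_
    rw [main i j]; ring
  rw [deepSquareLoss, hz, mul_zero]
end

section
/- Let L : ℝ^d → ℝ be twice continuously differentiable with ∇L globally Lipschitz with constant ℓ > 0, and let η ∈ (0, 1/ℓ). Then the map g : ℝ^d → ℝ^d, g(θ) = θ − η∇L(θ), is a C¹ diffeomorphism of ℝ^d: it is bijective, continuously differentiable, and its inverse is continuously differentiable. -/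
open Set

/-- Proposition: for a `C²` function `L` with `ℓ`-Lipschitz gradient and step size
`η ∈ (0, 1/ℓ)`, the gradient-descent map `g(θ) = θ − η∇L(θ)` is a `C¹` diffeomorphism
of `ℝ^d`: it is bijective, continuously differentiable, and has a continuously
differentiable inverse. -/
theorem gd_map_is_diffeomorphism
    (d : ℕ) (L : EuclideanSpace ℝ (Fin d) → ℝ) (hL : ContDiff ℝ 2 L)
    (ℓip : ℝ) (hℓip : 0 < ℓip)
    (hlip : ∀ θ₁ θ₂ : EuclideanSpace ℝ (Fin d),
      ‖gradient L θ₁ - gradient L θ₂‖ ≤ ℓip * ‖θ₁ - θ₂‖)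
    (η : ℝ) (hη : 0 < η) (hη' : η < 1 / ℓip)
    (g : EuclideanSpace ℝ (Fin d) → EuclideanSpace ℝ (Fin d))
    (hg : ∀ θ, g θ = θ - η • gradient L θ) :
    Function.Bijective g ∧
    ∃ e : EuclideanSpace ℝ (Fin d) ≃ EuclideanSpace ℝ (Fin d),
      (∀ θ, e θ = g θ) ∧ ContDiff ℝ 1 (e : EuclideanSpace ℝ (Fin d) → EuclideanSpace ℝ (Fin d)) ∧
      ContDiff ℝ 1 (e.symm : EuclideanSpace ℝ (Fin d) → EuclideanSpace ℝ (Fin d)) := by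
  have hηℓ : η * ℓip < 1 := by
    rw [lt_div_iff₀ hℓip] at hη'; linarith
  have hgrad : ContDiff ℝ 1 (gradient L) := by
    have h1 : ContDiff ℝ 1 (fderiv ℝ L) := hL.fderiv_right (by norm_num)
    exact (InnerProductSpace.toDual ℝ (EuclideanSpace ℝ (Fin d))).symm.contDiff.comp h1
  have hgfun : g = fun θ => θ - η • gradient L θ := funext hg
  have hgC : ContDiff ℝ 1 g := by
    rw [hgfun]; exact contDiff_id.sub (hgrad.const_smul η)
  have lipG : LipschitzWith ⟨ℓip, hℓip.le⟩ (gradient L) := by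
    apply LipschitzWith.of_dist_le_mul
    intro x y
    rw [dist_eq_norm, dist_eq_norm]; exact hlip x y
  set c : NNReal := ⟨η * ℓip, (mul_pos hη hℓip).le⟩ with hc_def
  have happrox : ApproximatesLinearOn g
      ((ContinuousLinearEquiv.refl ℝ (EuclideanSpace ℝ (Fin d)) :
        EuclideanSpace ℝ (Fin d) ≃L[ℝ] EuclideanSpace ℝ (Fin d)) :
        EuclideanSpace ℝ (Fin d) →L[ℝ] EuclideanSpace ℝ (Fin d)) Set.univ c := by
    intro x _ y _
    have h1 : g x - g y - (ContinuousLinearEquiv.refl ℝ (EuclideanSpace ℝ (Fin d)) :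
        EuclideanSpace ℝ (Fin d) →L[ℝ] EuclideanSpace ℝ (Fin d)) (x - y)
        = η • (gradient L y - gradient L x) := by
      rw [hg, hg]
      simp only [ContinuousLinearEquiv.coe_refl, ContinuousLinearMap.coe_id', id_eq, smul_sub]
      abel
    rw [h1, norm_smul]
    calc ‖η‖ * ‖gradient L y - gradient L x‖
        ≤ η * (ℓip * ‖y - x‖) := by
          rw [Real.norm_eq_abs, abs_of_pos hη]
          exact mul_le_mul_of_nonneg_left (hlip y x) hη.le
      _ = (c : ℝ) * ‖x - y‖ := by rw [norm_sub_rev]; push_cast [hc_def]; exact (mul_assoc η ℓip ‖x - y‖).symm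
  have hc : Subsingleton (EuclideanSpace ℝ (Fin d)) ∨
      c < (‖(((ContinuousLinearEquiv.refl ℝ (EuclideanSpace ℝ (Fin d))).symm :
        EuclideanSpace ℝ (Fin d) ≃L[ℝ] EuclideanSpace ℝ (Fin d)) :
        EuclideanSpace ℝ (Fin d) →L[ℝ] EuclideanSpace ℝ (Fin d))‖₊)⁻¹ := by
    rcases subsingleton_or_nontrivial (EuclideanSpace ℝ (Fin d)) with h | h
    · exact Or.inl h
    · right
      rw [ContinuousLinearEquiv.refl_symm, ContinuousLinearEquiv.coe_refl,
        ContinuousLinearMap.nnnorm_id, inv_one]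
      rw [← NNReal.coe_lt_coe]
      rw [NNReal.coe_one]; exact hηℓ
  let homeo := happrox.toHomeomorph g hc
  have hcoe : (homeo : EuclideanSpace ℝ (Fin d) → EuclideanSpace ℝ (Fin d)) = g := rfl
  have hbij : Function.Bijective g := hcoe ▸ homeo.bijective
  refine ⟨hbij, homeo.toEquiv, fun θ => rfl, hgC, ?_⟩
  rw [contDiff_iff_contDiffAt]
  intro y
  obtain ⟨a, rfl⟩ := hbij.surjective y
  set D := fderiv ℝ (gradient L) a with hD
  have hDn : ‖η • D‖ < 1 := by
    rw [norm_smul, Real.norm_eq_abs, abs_of_pos hη]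
    calc η * ‖D‖ ≤ η * ℓip :=
          mul_le_mul_of_nonneg_left (norm_fderiv_le_of_lipschitz ℝ lipG) hη.le
      _ < 1 := hηℓ
  let u : (EuclideanSpace ℝ (Fin d) →L[ℝ] EuclideanSpace ℝ (Fin d))ˣ := Units.oneSub (η • D) hDn
  let f'a : EuclideanSpace ℝ (Fin d) ≃L[ℝ] EuclideanSpace ℝ (Fin d) :=
    ContinuousLinearEquiv.ofUnit u
  have hG : HasFDerivAt (gradient L) D a :=
    ((hgrad.differentiable one_ne_zero) a).hasFDerivAt
  have hFD : HasFDerivAt g ((f'a : EuclideanSpace ℝ (Fin d) →L[ℝ] EuclideanSpace ℝ (Fin d))) a := by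
    have h2 : (f'a : EuclideanSpace ℝ (Fin d) →L[ℝ] EuclideanSpace ℝ (Fin d))
        = ContinuousLinearMap.id ℝ (EuclideanSpace ℝ (Fin d)) - η • D := rfl
    rw [h2, hgfun]
    exact (hasFDerivAt_id a).sub (hG.const_smul η)
  have hstrict : HasStrictFDerivAt g
      ((f'a : EuclideanSpace ℝ (Fin d) →L[ℝ] EuclideanSpace ℝ (Fin d))) a :=
    hgC.contDiffAt.hasStrictFDerivAt' hFD one_ne_zero
  have hCinv : ContDiffAt ℝ 1 (hgC.contDiffAt.localInverse hFD one_ne_zero) (g a) :=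
    hgC.contDiffAt.to_localInverse hFD one_ne_zero
  have hev : (homeo.toEquiv.symm : EuclideanSpace ℝ (Fin d) → EuclideanSpace ℝ (Fin d))
      =ᶠ[nhds (g a)] hgC.contDiffAt.localInverse hFD one_ne_zero := by
    filter_upwards [hstrict.eventually_right_inverse] with z hz
    apply hbij.injective
    have h2 : g ((homeo.toEquiv.symm : EuclideanSpace ℝ (Fin d) → EuclideanSpace ℝ (Fin d)) z)
        = z := by
      have := homeo.apply_symm_apply z
      rwa [hcoe] at this
    rw [h2]; exact hz.symm
  exact hCinv.congr_of_eventuallyEq hev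
end

section
/- Let F be a measurable space of hypotheses, D a probability distribution on Z, r : F × Z → [0,1] a measurable risk, R(f) = E_{z∼D} r(f,z), R̂_m(f) = (1/m)Σᵢ r(f,zᵢ) for S_m = (z₁,…,z_m), and Δ_m(f) = |R(f) − R̂_m(f)|. Then for any probability distribution P on F and any δ ∈ (0,1), with probability at least 1−δ over S_m ∼ D^m: E_{f∼P} exp( (2m−1) Δ_m(f)² ) ≤ 4m/δ. In particular, for every fixed f ∈ F, E_{S_m∼D^m} exp( (2m−1) Δ_m(f)² ) ≤ 4m. -/
open MeasureTheory Real ENNReal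

lemma hoeff_core {p : ℝ} (hp0 : 0 ≤ p) (hp1 : p ≤ 1) (s : ℝ) :
    1 - p + p * exp s ≤ exp (p * s + s ^ 2 / 8) := by
  set u : ℝ → ℝ := fun s => 1 - p + p * exp s with hu
  have hupos : ∀ t : ℝ, 0 < u t := by
    intro t
    have : 0 < 1 - p + p * exp t := by
      rcases eq_or_lt_of_le hp0 with h | h
      · simp [← h]
      · nlinarith [mul_pos h (exp_pos t)]
    simpa [hu] using this
  set f : ℝ → ℝ := fun s => Real.log (u s) - p * s - s ^ 2 / 8 with hf
  set f₁ : ℝ → ℝ := fun s => p * exp s / u s - p - s / 4 with hf₁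
  have hder : ∀ t : ℝ, HasDerivAt f (f₁ t) t := by
    intro t
    have h1 : HasDerivAt u (p * exp t) t := by
      exact (((Real.hasDerivAt_exp t).const_mul p).const_add (1 - p))
    have h2 : HasDerivAt (fun s => Real.log (u s)) (p * exp t / u t) t :=
      h1.log (hupos t).ne'
    have h3 : HasDerivAt (fun s : ℝ => p * s) p t := by
      simpa using (hasDerivAt_id t).const_mul p
    have h4 : HasDerivAt (fun s : ℝ => s ^ 2 / 8) (t / 4) t := by
      have := (hasDerivAt_pow 2 t).div_const 8
      have e : ((2:ℕ):ℝ) * t ^ (2 - 1) / 8 = t / 4 := by push_cast; ring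
      rw [e] at this
      exact this
    exact (h2.sub h3).sub h4
  have hder1 : ∀ t : ℝ, HasDerivAt f₁
      ((p * exp t * u t - p * exp t * (p * exp t)) / (u t) ^ 2 - 1 / 4) t := by
    intro t
    have h1 : HasDerivAt u (p * exp t) t := by
      exact (((Real.hasDerivAt_exp t).const_mul p).const_add (1 - p))
    have h2 : HasDerivAt (fun s => p * exp s) (p * exp t) t :=
      (Real.hasDerivAt_exp t).const_mul p
    have h3 : HasDerivAt (fun s => p * exp s / u s)
        ((p * exp t * u t - p * exp t * (p * exp t)) / (u t) ^ 2) t :=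
      h2.div h1 (hupos t).ne'
    have h4 : HasDerivAt (fun s : ℝ => s / 4) (1 / 4) t := by
      simpa using (hasDerivAt_id t).div_const 4
    exact (h3.sub_const p).sub h4
  have hf₂nonpos : ∀ t : ℝ,
      (p * exp t * u t - p * exp t * (p * exp t)) / (u t) ^ 2 - 1 / 4 ≤ 0 := by
    intro t
    have hu := hupos t
    rw [sub_nonpos, div_le_iff₀ (by positivity : (0:ℝ) < (u t)^2)]
    generalize u t = A at *
    generalize p * exp t = w
    nlinarith [sq_nonneg (A - 2 * w)]
  have hdiff1 : Differentiable ℝ f₁ := fun t => (hder1 t).differentiableAt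
  have hanti : Antitone f₁ := by
    have := antitoneOn_of_deriv_nonpos (convex_univ) hdiff1.continuous.continuousOn
      (fun t _ => (hdiff1 t).differentiableWithinAt)
      (fun t _ => by rw [(hder1 t).deriv]; exact hf₂nonpos t)
    intro a b hab
    exact this (Set.mem_univ a) (Set.mem_univ b) hab
  have hf₁0 : f₁ 0 = 0 := by simp [hf₁, hu]
  have hdiff : Differentiable ℝ f := fun t => (hder t).differentiableAt
  have hf0 : f 0 = 0 := by simp [hf, hu]
  have hle : f s ≤ 0 := by
    rcases le_or_gt 0 s with hs | hs
    · have hmono : AntitoneOn f (Set.Ici 0) := by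
        apply antitoneOn_of_deriv_nonpos (convex_Ici 0) hdiff.continuous.continuousOn
          (fun t _ => (hdiff t).differentiableWithinAt)
        intro t ht
        rw [(hder t).deriv]
        have : f₁ t ≤ f₁ 0 := hanti (le_of_lt (by simpa using ht))
        linarith [hf₁0 ▸ this]
      have := hmono (Set.self_mem_Ici) (by exact hs) hs
      linarith [hf0 ▸ this]
    · have hmono : MonotoneOn f (Set.Iic 0) := by
        apply monotoneOn_of_deriv_nonneg (convex_Iic 0) hdiff.continuous.continuousOn
          (fun t _ => (hdiff t).differentiableWithinAt)
        intro t ht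
        rw [(hder t).deriv]
        have : f₁ 0 ≤ f₁ t := hanti (le_of_lt (by simpa using ht))
        linarith [hf₁0 ▸ this]
      have := hmono (by exact hs.le) (Set.self_mem_Iic) hs.le
      linarith [hf0 ▸ this]
  have : Real.log (u s) ≤ p * s + s ^ 2 / 8 := by
    have : f s = Real.log (u s) - p * s - s ^ 2 / 8 := rfl
    linarith [hle, this ▸ hle]
  have h := (Real.log_le_iff_le_exp (hupos s)).mp this
  simpa [hu] using h

lemma exp_le_affine {x t : ℝ} (h0 : 0 ≤ x) (h1 : x ≤ 1) :
    Real.exp (t * x) ≤ 1 - x + x * Real.exp t := by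
  have := convexOn_exp.2 (Set.mem_univ 0) (Set.mem_univ t)
    (by linarith : (0:ℝ) ≤ 1 - x) h0 (by ring)
  simp only [smul_eq_mul, mul_zero, zero_add, Real.exp_zero, mul_one] at this
  calc Real.exp (t * x) = Real.exp (x * t) := by rw [mul_comm]
    _ ≤ (1 - x) + x * Real.exp t := this
    _ = 1 - x + x * Real.exp t := by ring

lemma integrable_exp_bdd {α : Type*} [MeasurableSpace α] (μ : Measure α) [IsProbabilityMeasure μ]
    (g : α → ℝ) (hg : Measurable g) (hb : ∀ x, |g x| ≤ 1) (t : ℝ) :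
    Integrable (fun x => Real.exp (t * g x)) μ := by
  apply (integrable_const (Real.exp |t|)).mono'
    ((Real.measurable_exp.comp (hg.const_mul t)).aestronglyMeasurable)
  filter_upwards with x
  simp only [Function.comp]
  rw [Real.norm_eq_abs, abs_of_pos (Real.exp_pos _)]
  apply Real.exp_le_exp.2
  calc t * g x ≤ |t * g x| := le_abs_self _
    _ = |t| * |g x| := abs_mul _ _
    _ ≤ |t| * 1 := mul_le_mul_of_nonneg_left (hb x) (abs_nonneg t)
    _ = |t| := mul_one _

lemma mgf_one {Z : Type*} [MeasurableSpace Z] (D : Measure Z) [IsProbabilityMeasure D]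
    (g : Z → ℝ) (hg : Measurable g) (h01 : ∀ z, g z ∈ Set.Icc (0:ℝ) 1) (t : ℝ) :
    ∫ z, Real.exp (t * (g z - ∫ z', g z' ∂D)) ∂D ≤ Real.exp (t ^ 2 / 8) := by
  set p := ∫ z', g z' ∂D with hp
  have hgint : Integrable g D := by
    apply (integrable_const (1:ℝ)).mono' hg.aestronglyMeasurable
    filter_upwards with z
    rw [Real.norm_eq_abs, abs_le]
    exact ⟨by linarith [(h01 z).1], (h01 z).2⟩
  have hp0 : 0 ≤ p := integral_nonneg fun z => (h01 z).1
  have hp1 : p ≤ 1 := by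
    have := integral_mono hgint (integrable_const 1) (fun z => (h01 z).2)
    simpa using this
  have hpt : ∀ z, Real.exp (t * (g z - p)) ≤
      Real.exp (-(t*p)) * (1 - g z + g z * Real.exp t) := by
    intro z
    rw [show t * (g z - p) = -(t*p) + t * g z by ring, Real.exp_add]
    exact mul_le_mul_of_nonneg_left (exp_le_affine (h01 z).1 (h01 z).2) (Real.exp_pos _).le
  have hint2 : Integrable (fun z => Real.exp (-(t*p)) * (1 - g z + g z * Real.exp t)) D :=
    (((integrable_const 1).sub hgint).add (hgint.mul_const _)).const_mul _
  have hbd : ∀ z, |g z - p| ≤ 1 := by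
    intro z
    rw [abs_le]
    constructor <;> [linarith [(h01 z).1]; linarith [(h01 z).2]]
  have hint1 : Integrable (fun z => Real.exp (t * (g z - p))) D :=
    integrable_exp_bdd D _ (hg.sub_const p) hbd t
  calc ∫ z, Real.exp (t * (g z - p)) ∂D
      ≤ ∫ z, Real.exp (-(t*p)) * (1 - g z + g z * Real.exp t) ∂D :=
        integral_mono hint1 hint2 hpt
    _ = Real.exp (-(t*p)) * (1 - p + p * Real.exp t) := by
        have i1 : Integrable (fun z => 1 - g z) D := (integrable_const 1).sub hgint
        have i2 : Integrable (fun z => g z * Real.exp t) D := hgint.mul_const _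
        rw [integral_const_mul, integral_add i1 i2,
          integral_sub (integrable_const 1) hgint, integral_mul_const]
        simp [hp]
    _ ≤ Real.exp (-(t*p)) * Real.exp (p * t + t ^ 2 / 8) :=
        mul_le_mul_of_nonneg_left (hoeff_core hp0 hp1 t) (Real.exp_pos _).le
    _ = Real.exp (t ^ 2 / 8) := by rw [← Real.exp_add]; ring_nf

lemma mgf_prod {Z : Type*} [MeasurableSpace Z] (D : Measure Z) [IsProbabilityMeasure D]
    (m : ℕ) (hm : 0 < m) (g : Z → ℝ) (hg : Measurable g)
    (h01 : ∀ z, g z ∈ Set.Icc (0:ℝ) 1) (t : ℝ) :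
    ∫ s : Fin m → Z, Real.exp (t * ((1/(m:ℝ)) * ∑ i, g (s i) - ∫ z, g z ∂D))
      ∂(Measure.pi fun _ => D) ≤ Real.exp (t ^ 2 / (8 * m)) := by
  letI : MeasureSpace Z := ⟨D⟩
  set p := ∫ z, g z ∂D with hp
  have hmpos : (0:ℝ) < m := Nat.cast_pos.2 hm
  have hsplit : ∀ s : Fin m → Z,
      t * ((1/(m:ℝ)) * ∑ i, g (s i) - p) = ∑ i : Fin m, (t/m) * (g (s i) - p) := by
    intro s
    rw [Finset.sum_congr rfl (fun i _ => mul_sub (t/(m:ℝ)) (g (s i)) p),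
      Finset.sum_sub_distrib, ← Finset.mul_sum, Finset.sum_const, Finset.card_univ,
      Fintype.card_fin, nsmul_eq_mul]
    field_simp
  calc ∫ s : Fin m → Z, Real.exp (t * ((1/(m:ℝ)) * ∑ i, g (s i) - p)) ∂(Measure.pi fun _ => D)
      = ∫ s : Fin m → Z, ∏ i : Fin m, Real.exp ((t/m) * (g (s i) - p)) ∂(Measure.pi fun _ => D) := by
        congr 1
        funext s
        rw [hsplit s, Real.exp_sum]
    _ = ∏ _i : Fin m, ∫ z, Real.exp ((t/m) * (g z - p)) ∂D :=
        MeasureTheory.integral_fintype_prod_eq_prod (𝕜 := ℝ) (ι := Fin m)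
          (f := fun _ z => Real.exp ((t/m) * (g z - p)))
    _ = (∫ z, Real.exp ((t/m) * (g z - p)) ∂D) ^ m := by
        rw [Finset.prod_const, Finset.card_univ, Fintype.card_fin]
    _ ≤ (Real.exp ((t/m) ^ 2 / 8)) ^ m := by
        apply pow_le_pow_left₀ (integral_nonneg fun z => (Real.exp_pos _).le)
        exact mgf_one D g hg h01 (t/m)
    _ = Real.exp (t^2/(8*m)) := by
        rw [← Real.exp_nat_mul]
        congr 1
        field_simp

/-- Lemma (McAllester): for a `[0,1]`-valued risk, true risk `R`, empirical risk
`R̂_m` over `S_m ∼ D^m`, and `Δ_m(f) = |R(f) − R̂_m(f)|`: for any prior probability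
distribution `P` on the hypothesis space and any `δ ∈ (0,1)`, with probability at
least `1−δ` over `S_m`, `E_{f∼P} exp((2m−1)Δ_m(f)²) ≤ 4m/δ`; in particular, for every
fixed hypothesis `f`, `E_{S_m∼D^m} exp((2m−1)Δ_m(f)²) ≤ 4m`. -/
theorem mcallester_exponential_moment
    {F Z : Type*} [MeasurableSpace F] [MeasurableSpace Z]
    (D : Measure Z) [IsProbabilityMeasure D]
    (m : ℕ) (hm : 0 < m)
    (r : F → Z → ℝ) (hrmeas : Measurable (Function.uncurry r))
    (hr01 : ∀ f z, r f z ∈ Set.Icc (0 : ℝ) 1)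
    (R : F → ℝ) (hR : ∀ f, R f = ∫ z, r f z ∂D)
    (Rhat : (Fin m → Z) → F → ℝ)
    (hRhat : ∀ s f, Rhat s f = (1 / (m : ℝ)) * ∑ i, r f (s i))
    (Δ : (Fin m → Z) → F → ℝ)
    (hΔ : ∀ s f, Δ s f = |R f - Rhat s f|) :
    (∀ (P : Measure F), IsProbabilityMeasure P → ∀ δ ∈ Set.Ioo (0 : ℝ) 1,
      1 - ENNReal.ofReal δ ≤
        (Measure.pi fun _ : Fin m => D) {s : Fin m → Z |
          ∫ f, Real.exp ((2 * m - 1) * (Δ s f) ^ 2) ∂P ≤ 4 * m / δ}) ∧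
    (∀ f : F, ∫ s, Real.exp ((2 * m - 1) * (Δ s f) ^ 2)
        ∂(Measure.pi fun _ : Fin m => D) ≤ 4 * m) := by
  have hmpos : (0:ℝ) < m := Nat.cast_pos.2 hm
  have hm1 : (1:ℝ) ≤ m := Nat.one_le_cast.2 hm
  set Dm : Measure (Fin m → Z) := Measure.pi fun _ : Fin m => D with hDm
  haveI : IsProbabilityMeasure Dm := by rw [hDm]; infer_instance
  set lam : ℝ := 2 * (m:ℝ) - 1 with hlam
  have hlam1 : (1:ℝ) ≤ lam := by rw [hlam]; linarith
  have hlampos : (0:ℝ) < lam := by linarith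
  set b : ℝ := 1 / (4 * lam) with hbdef
  have hb : 0 < b := by rw [hbdef]; positivity
  set b' : ℝ := 1 / (8 * m * lam) with hb'def
  have hb' : 0 < b' := by rw [hb'def]; positivity
  have hbb' : b - 1 / (8 * m) = b' := by
    rw [hbdef, hb'def, hlam]
    have : (2*(m:ℝ)-1) ≠ 0 := by linarith
    field_simp
    ring
  -- measurability
  have hmr : ∀ f, Measurable (r f) := fun f => hrmeas.comp measurable_prodMk_left
  have hRmeas : Measurable R := by
    have hRe : R = fun f => ∫ z, r f z ∂D := funext hR
    rw [hRe]
    exact (hrmeas.stronglyMeasurable.integral_prod_right').measurable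
  have hRhatm : ∀ f, Measurable (fun s : Fin m → Z => Rhat s f) := by
    intro f
    have he : (fun s : Fin m → Z => Rhat s f) = fun s => (1/(m:ℝ)) * ∑ i, r f (s i) :=
      funext fun s => hRhat s f
    rw [he]
    exact (Finset.measurable_sum _ fun i _ => (hmr f).comp (measurable_pi_apply i)).const_mul _
  have hjoint : Measurable (fun q : (Fin m → Z) × F => Δ q.1 q.2) := by
    have he : (fun q : (Fin m → Z) × F => Δ q.1 q.2)
        = fun q => |R q.2 - (1/(m:ℝ)) * ∑ i, r q.2 (q.1 i)| :=
      funext fun q => by rw [hΔ, hRhat]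
    rw [he]
    apply Measurable.abs
    apply (hRmeas.comp measurable_snd).sub
    apply Measurable.const_mul
    apply Finset.measurable_sum
    intro i _
    exact hrmeas.comp (measurable_snd.prodMk ((measurable_pi_apply i).comp measurable_fst))
  have hΔsm : ∀ f, Measurable (fun s : Fin m → Z => Δ s f) :=
    fun f => hjoint.comp (measurable_id.prodMk measurable_const)
  have hΔfm : ∀ s, Measurable (fun f : F => Δ s f) :=
    fun s => hjoint.comp measurable_prodMk_left
  -- range facts
  have hR01 : ∀ f, R f ∈ Set.Icc (0:ℝ) 1 := by
    intro f
    have hgint : Integrable (r f) D := by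
      apply (integrable_const (1:ℝ)).mono' (hmr f).aestronglyMeasurable
      filter_upwards with z
      rw [Real.norm_eq_abs, abs_le]
      exact ⟨by linarith [(hr01 f z).1], (hr01 f z).2⟩
    constructor
    · rw [hR]; exact integral_nonneg fun z => (hr01 f z).1
    · rw [hR]
      have := integral_mono hgint (integrable_const 1) (fun z => (hr01 f z).2)
      simpa using this
  have hRhat01 : ∀ s f, Rhat s f ∈ Set.Icc (0:ℝ) 1 := by
    intro s f
    rw [hRhat]
    constructor
    · apply mul_nonneg (by positivity)
      exact Finset.sum_nonneg fun i _ => (hr01 f (s i)).1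
    · rw [← mul_le_mul_iff_of_pos_left hmpos, ← mul_assoc]
      have h1 : (m:ℝ) * (1/(m:ℝ)) = 1 := by field_simp
      rw [h1, one_mul, mul_one]
      calc ∑ i, r f (s i) ≤ ∑ _i : Fin m, (1:ℝ) :=
            Finset.sum_le_sum fun i _ => (hr01 f (s i)).2
        _ = m := by simp
  -- key lintegral bound
  have key : ∀ f, ∫⁻ s, ENNReal.ofReal (Real.exp (lam * (Δ s f)^2)) ∂Dm
      ≤ ENNReal.ofReal (Real.sqrt (2*m)) := by
    intro f
    set Y : (Fin m → Z) → ℝ := fun s => Rhat s f - R f with hY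
    have hYm : Measurable Y := (hRhatm f).sub_const _
    have hYb : ∀ s, |Y s| ≤ 1 := by
      intro s
      have hYs : Y s = Rhat s f - R f := rfl
      rw [hYs, abs_le]
      have h1 := hRhat01 s f
      have h2 := hR01 f
      exact ⟨by linarith [h1.1, h2.2], by linarith [h1.2, h2.1]⟩
    have hΔY : ∀ s, (Δ s f)^2 = (Y s)^2 := by
      intro s
      have hYs : Y s = Rhat s f - R f := rfl
      rw [hΔ, sq_abs, hYs]
      ring
    -- mgf bound, lintegral form
    have mgfL : ∀ t : ℝ, ∫⁻ s, ENNReal.ofReal (Real.exp (t * Y s)) ∂Dm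
        ≤ ENNReal.ofReal (Real.exp (t^2/(8*m))) := by
      intro t
      have hint : Integrable (fun s => Real.exp (t * Y s)) Dm :=
        integrable_exp_bdd Dm Y hYm hYb t
      rw [← ofReal_integral_eq_lintegral_ofReal hint (ae_of_all _ fun s => (Real.exp_pos _).le)]
      apply ENNReal.ofReal_le_ofReal
      have hmp := mgf_prod D m hm (r f) (hmr f) (hr01 f) t
      have he : (fun s : Fin m → Z => Real.exp (t * Y s))
          = fun s => Real.exp (t * ((1/(m:ℝ)) * ∑ i, r f (s i) - ∫ z, r f z ∂D)) := by
        funext s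
        have hYs : Y s = Rhat s f - R f := rfl
        rw [hYs, hRhat, hR]
      rw [he]
      exact hmp
    -- gaussian identity
    have gauss_int : ∀ y : ℝ, Integrable (fun x : ℝ => Real.exp (-b*x^2 + x*y)) := by
      intro y
      have hptw : (fun x : ℝ => Real.exp (-b*x^2 + x*y))
          = fun x => Real.exp (lam*y^2) * Real.exp (-b*(x + -(y/(2*b)))^2) := by
        funext x
        rw [← Real.exp_add]
        congr 1
        rw [hbdef]
        field_simp
        ring
      rw [hptw]
      exact ((integrable_exp_neg_mul_sq hb).comp_add_right _).const_mul _
    have gauss : ∀ y : ℝ, ∫ x : ℝ, Real.exp (-b*x^2 + x*y)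
        = Real.exp (lam * y^2) * Real.sqrt (π/b) := by
      intro y
      have hptw : (fun x : ℝ => Real.exp (-b*x^2 + x*y))
          = fun x => Real.exp (lam*y^2) * Real.exp (-b*(x + -(y/(2*b)))^2) := by
        funext x
        rw [← Real.exp_add]
        congr 1
        rw [hbdef]
        field_simp
        ring
      rw [hptw, integral_const_mul,
        integral_add_right_eq_self (fun x : ℝ => Real.exp (-b*x^2)) (-(y/(2*b))),
        integral_gaussian]
    have hsqrtpos : 0 < Real.sqrt (π/b) := Real.sqrt_pos.2 (div_pos pi_pos hb)
    have gaussL : ∀ y : ℝ, ENNReal.ofReal (Real.exp (lam*y^2))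
        = ENNReal.ofReal ((Real.sqrt (π/b))⁻¹)
          * ∫⁻ x : ℝ, ENNReal.ofReal (Real.exp (-b*x^2 + x*y)) := by
      intro y
      rw [← ofReal_integral_eq_lintegral_ofReal (gauss_int y)
        (ae_of_all _ fun x => (Real.exp_pos _).le), gauss y,
        ← ENNReal.ofReal_mul (by positivity)]
      congr 1
      field_simp
    set c : ℝ≥0∞ := ENNReal.ofReal ((Real.sqrt (π/b))⁻¹) with hc
    have hswapmeas : AEMeasurable
        (fun q : (Fin m → Z) × ℝ => ENNReal.ofReal (Real.exp (-b*q.2^2 + q.2 * Y q.1)))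
        (Dm.prod volume) := by
      apply Measurable.aemeasurable
      apply ENNReal.measurable_ofReal.comp
      apply Real.measurable_exp.comp
      apply Measurable.add
      · exact (measurable_snd.pow_const 2).const_mul (-b)
      · exact measurable_snd.mul (hYm.comp measurable_fst)
    calc ∫⁻ s, ENNReal.ofReal (Real.exp (lam * (Δ s f)^2)) ∂Dm
        = ∫⁻ s, (c * ∫⁻ x : ℝ, ENNReal.ofReal (Real.exp (-b*x^2 + x * Y s))) ∂Dm := by
          apply lintegral_congr
          intro s
          rw [hΔY s, gaussL (Y s)]
      _ = c * ∫⁻ s, (∫⁻ x : ℝ, ENNReal.ofReal (Real.exp (-b*x^2 + x * Y s))) ∂Dm :=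
          lintegral_const_mul' _ _ ENNReal.ofReal_ne_top
      _ = c * ∫⁻ x : ℝ, ∫⁻ s, ENNReal.ofReal (Real.exp (-b*x^2 + x * Y s)) ∂Dm := by
          rw [lintegral_lintegral_swap hswapmeas]
      _ ≤ c * ∫⁻ x : ℝ, ENNReal.ofReal (Real.exp (-b' * x^2)) := by
          apply mul_le_mul_right
          apply lintegral_mono
          intro x
          calc ∫⁻ s, ENNReal.ofReal (Real.exp (-b*x^2 + x * Y s)) ∂Dm
              = ENNReal.ofReal (Real.exp (-b*x^2)) * ∫⁻ s, ENNReal.ofReal (Real.exp (x * Y s)) ∂Dm := by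
                rw [← lintegral_const_mul' _ _ ENNReal.ofReal_ne_top]
                apply lintegral_congr
                intro s
                rw [← ENNReal.ofReal_mul (Real.exp_pos _).le, ← Real.exp_add]
            _ ≤ ENNReal.ofReal (Real.exp (-b*x^2)) * ENNReal.ofReal (Real.exp (x^2/(8*m))) :=
                mul_le_mul_right (mgfL x) _
            _ = ENNReal.ofReal (Real.exp (-b' * x^2)) := by
                rw [← ENNReal.ofReal_mul (Real.exp_pos _).le, ← Real.exp_add]
                congr 2
                rw [← hbb']
                ring
      _ = c * ENNReal.ofReal (Real.sqrt (π/b')) := by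
          rw [← ofReal_integral_eq_lintegral_ofReal (integrable_exp_neg_mul_sq hb')
            (ae_of_all _ fun x => (Real.exp_pos _).le), integral_gaussian]
      _ = ENNReal.ofReal ((Real.sqrt (π/b))⁻¹ * Real.sqrt (π/b')) := by
          rw [hc, ← ENNReal.ofReal_mul (by positivity)]
      _ = ENNReal.ofReal (Real.sqrt (2*m)) := by
          congr 1
          rw [← Real.sqrt_inv, ← Real.sqrt_mul (by positivity)]
          congr 1
          rw [hbdef, hb'def]
          have hπ : (0:ℝ) < π := pi_pos
          field_simp
          ring
  have hsqrt_le : Real.sqrt (2*m) ≤ 4*m := by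
    have h1 : Real.sqrt (2*(m:ℝ)) ≤ Real.sqrt ((4*m)^2) := by
      apply Real.sqrt_le_sqrt
      nlinarith
    rwa [Real.sqrt_sq (by positivity)] at h1
  have key4 : ∀ f, ∫⁻ s, ENNReal.ofReal (Real.exp (lam * (Δ s f)^2)) ∂Dm
      ≤ ENNReal.ofReal (4*m) :=
    fun f => (key f).trans (ENNReal.ofReal_le_ofReal hsqrt_le)
  -- part 2
  have part2 : ∀ f : F, ∫ s, Real.exp (lam * (Δ s f) ^ 2) ∂Dm ≤ 4 * m := by
    intro f
    have hmeasf : AEStronglyMeasurable (fun s => Real.exp (lam * (Δ s f)^2)) Dm :=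
      (Real.measurable_exp.comp (((hΔsm f).pow_const 2).const_mul lam)).aestronglyMeasurable
    rw [integral_eq_lintegral_of_nonneg_ae (ae_of_all _ fun s => (Real.exp_pos _).le) hmeasf]
    calc (∫⁻ s, ENNReal.ofReal (Real.exp (lam * (Δ s f)^2)) ∂Dm).toReal
        ≤ (ENNReal.ofReal (4*(m:ℝ))).toReal :=
          ENNReal.toReal_mono ENNReal.ofReal_ne_top (key4 f)
      _ = 4*m := ENNReal.toReal_ofReal (by positivity)
  refine ⟨?_, part2⟩
  intro P hP δ hδ
  obtain ⟨hδ0, hδ1⟩ := hδ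
  set cr : ℝ := 4*m/δ with hcr
  have hcr0 : 0 < cr := by rw [hcr]; positivity
  set H : (Fin m → Z) → ℝ≥0∞ :=
    fun s => ∫⁻ f, ENNReal.ofReal (Real.exp (lam * (Δ s f)^2)) ∂P with hH
  have hFjm : Measurable (fun q : (Fin m → Z) × F =>
      ENNReal.ofReal (Real.exp (lam * (Δ q.1 q.2)^2))) :=
    ENNReal.measurable_ofReal.comp
      (Real.measurable_exp.comp ((hjoint.pow_const 2).const_mul lam))
  have hHmeas : Measurable H := by
    rw [hH]
    exact Measurable.lintegral_prod_right' hFjm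
  have hHint : ∫⁻ s, H s ∂Dm ≤ ENNReal.ofReal (4*m) := by
    rw [hH, lintegral_lintegral_swap hFjm.aemeasurable]
    calc ∫⁻ f, ∫⁻ s, ENNReal.ofReal (Real.exp (lam * (Δ s f)^2)) ∂Dm ∂P
        ≤ ∫⁻ _f, ENNReal.ofReal (4*(m:ℝ)) ∂P := lintegral_mono fun f => key4 f
      _ = ENNReal.ofReal (4*m) := by simp
  have hGH : ∀ s, ∫ f, Real.exp (lam * (Δ s f)^2) ∂P = (H s).toReal := by
    intro s
    rw [hH]
    exact integral_eq_lintegral_of_nonneg_ae (ae_of_all _ fun f => (Real.exp_pos _).le)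
      (Real.measurable_exp.comp (((hΔfm s).pow_const 2).const_mul lam)).aestronglyMeasurable
  set A : Set (Fin m → Z) := {s | ∫ f, Real.exp (lam * (Δ s f)^2) ∂P ≤ cr} with hA
  have hsub : Aᶜ ⊆ {s | ENNReal.ofReal cr ≤ H s} := by
    intro s hs
    simp only [hA, Set.mem_compl_iff, Set.mem_setOf_eq, not_le] at hs
    rw [Set.mem_setOf_eq]
    by_cases htop : H s = ∞
    · rw [htop]; exact le_top
    · exact ENNReal.ofReal_le_of_le_toReal (by rw [← hGH s]; exact hs.le)
  have hcompl : Dm Aᶜ ≤ ENNReal.ofReal δ := by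
    refine le_trans (measure_mono hsub) ?_
    refine le_trans (meas_ge_le_lintegral_div hHmeas.aemeasurable
      (ENNReal.ofReal_pos.2 hcr0).ne' ENNReal.ofReal_ne_top) ?_
    apply ENNReal.div_le_of_le_mul
    refine le_trans hHint ?_
    rw [← ENNReal.ofReal_mul hδ0.le]
    apply ENNReal.ofReal_le_ofReal
    rw [hcr, mul_div_assoc, mul_comm δ, mul_assoc, div_mul_cancel₀ _ hδ0.ne']
  have hone : (1:ℝ≥0∞) ≤ Dm A + ENNReal.ofReal δ := by
    calc (1:ℝ≥0∞) = Dm Set.univ := (measure_univ).symm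
      _ = Dm (A ∪ Aᶜ) := by rw [Set.union_compl_self]
      _ ≤ Dm A + Dm Aᶜ := measure_union_le _ _
      _ ≤ Dm A + ENNReal.ofReal δ := add_le_add_right hcompl _
  exact tsub_le_iff_right.mpr hone
end
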